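/- For all positive integers n and m, ∑_{k=1}^{n} {n k} · C(m,k) · k! · H_k = H_m · m^n − ∑_{j=1}^{m} (m-j)^n / j. -/
import Mathlib


/-- Stirling numbers of the second kind. -/
def stirling2 : ℕ → ℕ → ℕ
  | 0, 0 => 1
  | 0, _ + 1 => 0
  | _ + 1, 0 => 0
  | n + 1, k + 1 => (k + 1) * stirling2 n (k + 1) + stirling2 n k

lemma stirling2_eq_zero : ∀ n k : ℕ, n < k → stirling2 n k = 0
  | 0, _ + 1, _ => rfl
  | n + 1, k + 1, h => by
    rw [stirling2, stirling2_eq_zero n (k+1) (by omega), stirling2_eq_zero n k (by omega)]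
    ring

lemma desc_step (x k : ℕ) :
    x * x.descFactorial k = x.descFactorial (k+1) + k * x.descFactorial k := by
  rcases le_or_gt k x with h | h
  · rw [Nat.descFactorial_succ]
    have h2 : x - k + k = x := by omega
    nlinarith [h2]
  · rw [Nat.descFactorial_eq_zero_iff_lt.mpr h,
      Nat.descFactorial_eq_zero_iff_lt.mpr (by omega)]
    ring

lemma sumA (n x : ℕ) :
    ∑ k ∈ Finset.range (n+1), stirling2 n k * x.descFactorial k = x ^ n := by
  induction n with
  | zero => simp [stirling2]
  | succ n ih =>
    rw [Finset.sum_range_succ' (fun k => stirling2 (n+1) k * x.descFactorial k)]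
    have h0 : stirling2 (n+1) 0 = 0 := rfl
    rw [h0]
    simp only [zero_mul, add_zero]
    have : ∀ k, stirling2 (n+1) (k+1) * x.descFactorial (k+1)
        = (k+1) * stirling2 n (k+1) * x.descFactorial (k+1)
          + stirling2 n k * x.descFactorial (k+1) := by
      intro k; rw [stirling2]; ring
    rw [Finset.sum_congr rfl fun k _ => this k, Finset.sum_add_distrib]
    have e1 : ∑ k ∈ Finset.range (n+1), (k+1) * stirling2 n (k+1) * x.descFactorial (k+1)
        = ∑ k ∈ Finset.range (n+1), k * stirling2 n k * x.descFactorial k := by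
      have ha := Finset.sum_range_succ' (fun k => k * stirling2 n k * x.descFactorial k) (n+1)
      have hb := Finset.sum_range_succ (fun k => k * stirling2 n k * x.descFactorial k) (n+1)
      simp only [stirling2_eq_zero n (n+1) (by omega)] at hb
      simp only [Nat.zero_mul, Nat.mul_zero, zero_mul, mul_zero, add_zero] at ha hb
      omega
    rw [e1, ← Finset.sum_add_distrib]
    have e2 : ∀ k, k * stirling2 n k * x.descFactorial k + stirling2 n k * x.descFactorial (k+1)
        = x * (stirling2 n k * x.descFactorial k) := by
      intro k
      have := desc_step x k
      nlinarith [this]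
    rw [Finset.sum_congr rfl fun k _ => e2 k, ← Finset.mul_sum, ih]
    ring

lemma sumB : ∀ m k : ℕ, ∑ j ∈ Finset.Icc 1 m, ((m-j).choose k : ℚ) / j
    = (m.choose k : ℚ) * (harmonic m - harmonic k) := by
  intro m
  induction m with
  | zero =>
    intro k
    rcases k with _ | k <;> simp [harmonic]
  | succ m ih =>
    intro k
    rw [Finset.sum_Icc_succ_top (by omega : 1 ≤ m + 1)]
    rcases k with _ | k
    · have ih0 := ih 0
      simp only [Nat.choose_zero_right, Nat.cast_one, harmonic_zero, sub_zero] at ih0 ⊢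
      rw [ih0, harmonic_succ]
      push_cast
      ring
    · have hz : ((m+1-(m+1)).choose (k+1) : ℚ) = 0 := by norm_num
      rw [hz]
      have : ∀ j ∈ Finset.Icc 1 m, ((m+1-j).choose (k+1) : ℚ) / j
          = ((m-j).choose (k+1) : ℚ) / j + ((m-j).choose k : ℚ) / j := by
        intro j hj
        simp only [Finset.mem_Icc] at hj
        have : m + 1 - j = (m - j) + 1 := by omega
        rw [this, Nat.choose_succ_succ]
        push_cast
        ring
      rw [Finset.sum_congr rfl this, Finset.sum_add_distrib, ih (k+1), ih k]
      have hp : ((m+1).choose (k+1) : ℚ) = (m.choose (k+1) : ℚ) + (m.choose k : ℚ) := by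
        rw [Nat.choose_succ_succ]; push_cast; ring
      have hrel : ((m:ℚ)+1) * (m.choose k : ℚ) = ((k:ℚ)+1) * ((m+1).choose (k+1) : ℚ) := by
        have h := Nat.add_one_mul_choose_eq m k
        have h2 := congrArg (fun x : ℕ => (x : ℚ)) h
        push_cast at h2
        linarith
      rw [harmonic_succ, harmonic_succ]
      have hm1 : ((m:ℚ)+1) ≠ 0 := by positivity
      have hk1 : ((k:ℚ)+1) ≠ 0 := by positivity
      have hq : ((m+1).choose (k+1) : ℚ)/((m:ℚ)+1) = (m.choose k : ℚ)/((k:ℚ)+1) := by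
        rw [div_eq_div_iff hm1 hk1]; linarith [hrel]
      push_cast [hz] at hp hq ⊢
      linear_combination (-(harmonic m - harmonic k) + 1/((k:ℚ)+1)) * hp - hq

theorem stirling_binom_harmonic_sum (n m : ℕ) (hn : 1 ≤ n) (hm : 1 ≤ m) :
    ∑ k ∈ Finset.Icc 1 n,
      (stirling2 n k : ℚ) * (m.choose k : ℚ) * (k.factorial : ℚ) * harmonic k
      = harmonic m * (m : ℚ) ^ n - ∑ j ∈ Finset.Icc 1 m, ((m - j : ℕ) : ℚ) ^ n / (j : ℚ) := by
  have castA : ∀ x : ℕ, ((x:ℚ))^n = ∑ k ∈ Finset.range (n+1),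
      (stirling2 n k : ℚ) * (k.factorial : ℚ) * (x.choose k : ℚ) := by
    intro x
    have h := congrArg (fun t : ℕ => (t : ℚ)) (sumA n x)
    push_cast at h
    rw [← h]
    refine Finset.sum_congr rfl fun k _ => ?_
    rw [Nat.descFactorial_eq_factorial_mul_choose]
    push_cast
    ring
  have step1 : harmonic m * (m:ℚ)^n = ∑ k ∈ Finset.range (n+1),
      (stirling2 n k : ℚ) * (k.factorial : ℚ) * ((m.choose k : ℚ) * harmonic m) := by
    rw [castA m, Finset.mul_sum]
    exact Finset.sum_congr rfl fun k _ => by ring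
  have step2 : ∑ j ∈ Finset.Icc 1 m, ((m - j : ℕ) : ℚ) ^ n / (j : ℚ)
      = ∑ k ∈ Finset.range (n+1), (stirling2 n k : ℚ) * (k.factorial : ℚ)
          * (∑ j ∈ Finset.Icc 1 m, ((m-j).choose k : ℚ) / j) := by
    rw [Finset.sum_congr rfl (fun j _ => by
      rw [castA (m-j), Finset.sum_div] :
      ∀ j ∈ Finset.Icc 1 m, ((m - j : ℕ) : ℚ) ^ n / (j : ℚ)
        = ∑ k ∈ Finset.range (n+1),
            (stirling2 n k : ℚ) * (k.factorial : ℚ) * ((m-j).choose k : ℚ) / j)]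
    rw [Finset.sum_comm]
    refine Finset.sum_congr rfl fun k _ => ?_
    rw [Finset.mul_sum]
    exact Finset.sum_congr rfl fun j _ => by ring
  rw [step1, step2, ← Finset.sum_sub_distrib]
  have hsplit : Finset.range (n+1) = insert 0 (Finset.Icc 1 n) := by
    ext x
    simp only [Finset.mem_range, Finset.mem_insert, Finset.mem_Icc]
    omega
  rw [hsplit, Finset.sum_insert (by simp)]
  have h0 : (stirling2 n 0 : ℚ) * ((0:ℕ).factorial : ℚ) * ((m.choose 0 : ℚ) * harmonic m)
      - (stirling2 n 0 : ℚ) * ((0:ℕ).factorial : ℚ)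
        * (∑ j ∈ Finset.Icc 1 m, ((m-j).choose 0 : ℚ) / j) = 0 := by
    rw [sumB m 0]
    simp
  rw [h0, zero_add]
  refine (Finset.sum_congr rfl fun k _ => ?_).symm
  rw [sumB m k]
  ring
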